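/- With the setup of the SP pruning step: let x be K-sparse with support T, |T̃| = 2K, x_p = Φ_{T̃}^† y the projection coefficients, and let T^ℓ ⊂ T̃ be the K indices of largest magnitude in x_p, ΔT = T̃ − T^ℓ. If ε = x_p − x_{T̃}, then ‖x_{T∩ΔT}‖₂ ≤ 2‖ε‖₂. -/

import Mathlib

open scoped BigOperators

/-- Squared-sum Euclidean norm of a finite vector. -/
noncomputable def l2norm {ι : Type*} [Fintype ι] (v : ι → ℝ) : ℝ :=
  Real.sqrt (∑ i, v i ^ 2)

/-- The ℓ₁ norm of a finite vector. -/
noncomputable def l1norm {ι : Type*} [Fintype ι] (v : ι → ℝ) : ℝ :=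
  ∑ i, |v i|

/-- `Φ_I q`: the product of the column submatrix `Φ_I` with a coefficient vector `q`. -/
noncomputable def colMul {m N : ℕ} (Φ : Matrix (Fin m) (Fin N) ℝ) (I : Finset (Fin N))
    (q : I → ℝ) : Fin m → ℝ :=
  fun r => ∑ i : I, Φ r i.1 * q i

/-- `Φ_I^* y`: the transpose of the column submatrix applied to `y`. -/
noncomputable def colTMul {m N : ℕ} (Φ : Matrix (Fin m) (Fin N) ℝ) (I : Finset (Fin N))
    (y : Fin m → ℝ) : I → ℝ :=
  fun i => ∑ r, Φ r i.1 * y r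

/-- The Gram matrix `Φ_I^* Φ_I`. -/
noncomputable def gram {m N : ℕ} (Φ : Matrix (Fin m) (Fin N) ℝ) (I : Finset (Fin N)) :
    Matrix I I ℝ :=
  fun i j => ∑ r, Φ r i.1 * Φ r j.1

/-- `Φ` satisfies the restricted isometry property at sparsity `K` with parameter `δ`. -/
def IsRIP {m N : ℕ} (Φ : Matrix (Fin m) (Fin N) ℝ) (K : ℕ) (δ : ℝ) : Prop :=
  ∀ I : Finset (Fin N), I.card ≤ K → ∀ q : I → ℝ,
    (1 - δ) * ∑ i, q i ^ 2 ≤ ∑ r, (colMul Φ I q r) ^ 2 ∧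
      ∑ r, (colMul Φ I q r) ^ 2 ≤ (1 + δ) * ∑ i, q i ^ 2

/-- The RIP constant `δ_K`: the infimum of all admissible RIP parameters. -/
noncomputable def ripConst {m N : ℕ} (Φ : Matrix (Fin m) (Fin N) ℝ) (K : ℕ) : ℝ :=
  sInf {δ : ℝ | 0 ≤ δ ∧ IsRIP Φ K δ}

/-- Projection coefficients `(Φ_I^* Φ_I)⁻¹ Φ_I^* y`. -/
noncomputable def projCoeff {m N : ℕ} (Φ : Matrix (Fin m) (Fin N) ℝ) (I : Finset (Fin N))
    (y : Fin m → ℝ) : I → ℝ :=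
  (gram Φ I)⁻¹.mulVec (colTMul Φ I y)

/-- Orthogonal projection of `y` onto the column span of `Φ_I`. -/
noncomputable def projVec {m N : ℕ} (Φ : Matrix (Fin m) (Fin N) ℝ) (I : Finset (Fin N))
    (y : Fin m → ℝ) : Fin m → ℝ :=
  colMul Φ I (projCoeff Φ I y)

lemma sum_le_sum_of_card_eq {α : Type*} (f : α → ℝ) (hf : ∀ a, 0 ≤ f a)
    (A B : Finset α) (hcard : A.card = B.card)
    (h : ∀ a ∈ A, ∀ b ∈ B, f a ≤ f b) : ∑ a ∈ A, f a ≤ ∑ b ∈ B, f b := by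
  rcases A.eq_empty_or_nonempty with hA | hA
  · simp only [hA, Finset.sum_empty]
    exact Finset.sum_nonneg fun b _ => hf b
  · have hB : B.Nonempty := Finset.card_pos.mp (hcard ▸ Finset.card_pos.mpr hA)
    obtain ⟨b0, hb0, hmin⟩ := B.exists_min_image f hB
    calc ∑ a ∈ A, f a ≤ ∑ _a ∈ A, f b0 :=
          Finset.sum_le_sum fun a ha => h a ha b0 hb0
      _ = B.card • f b0 := by rw [Finset.sum_const, hcard]
      _ ≤ ∑ b ∈ B, f b := Finset.card_nsmul_le_sum B f (f b0) fun b hb => hmin b hb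

lemma sqrt_sum_sq_add_le {α : Type*} [DecidableEq α] (s : Finset α) (v w : α → ℝ) :
    Real.sqrt (∑ i ∈ s, (v i + w i) ^ 2) ≤
      Real.sqrt (∑ i ∈ s, v i ^ 2) + Real.sqrt (∑ i ∈ s, w i ^ 2) := by
  set a := Real.sqrt (∑ i ∈ s, v i ^ 2) with ha
  set b := Real.sqrt (∑ i ∈ s, w i ^ 2) with hb
  have ha0 : 0 ≤ a := Real.sqrt_nonneg _
  have hb0 : 0 ≤ b := Real.sqrt_nonneg _
  have hva : ∑ i ∈ s, v i ^ 2 = a ^ 2 :=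
    (Real.sq_sqrt (Finset.sum_nonneg fun i _ => sq_nonneg _)).symm
  have hwb : ∑ i ∈ s, w i ^ 2 = b ^ 2 :=
    (Real.sq_sqrt (Finset.sum_nonneg fun i _ => sq_nonneg _)).symm
  have hcs : ∑ i ∈ s, v i * w i ≤ a * b := Real.sum_mul_le_sqrt_mul_sqrt s v w
  have expand : ∑ i ∈ s, (v i + w i) ^ 2 =
      ∑ i ∈ s, v i ^ 2 + 2 * ∑ i ∈ s, (v i * w i) + ∑ i ∈ s, w i ^ 2 := by
    rw [Finset.mul_sum, ← Finset.sum_add_distrib, ← Finset.sum_add_distrib]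
    exact Finset.sum_congr rfl fun i _ => by ring
  have key : ∑ i ∈ s, (v i + w i) ^ 2 ≤ (a + b) ^ 2 := by
    rw [expand, hva, hwb]; nlinarith [hcs]
  calc Real.sqrt (∑ i ∈ s, (v i + w i) ^ 2) ≤ Real.sqrt ((a + b) ^ 2) :=
        Real.sqrt_le_sqrt key
    _ = a + b := Real.sqrt_sq (by linarith)

theorem pruning_capture {m N : ℕ} (Φ : Matrix (Fin m) (Fin N) ℝ) (K : ℕ)
    (x : Fin N → ℝ) (T Tt Tl : Finset (Fin N))
    (hsupp : ∀ i, i ∉ T → x i = 0) (hT : T.card ≤ K)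
    (hTt : Tt.card = 2 * K) (hg : IsUnit (gram Φ Tt))
    (hTl : Tl ⊆ Tt) (hTlcard : Tl.card = K)
    (hsel : ∀ i, ∀ hi : i ∈ Tl, ∀ j, ∀ hj : j ∈ Tt, j ∉ Tl →
      |projCoeff Φ Tt (Φ.mulVec x) ⟨j, hj⟩| ≤
        |projCoeff Φ Tt (Φ.mulVec x) ⟨i, hTl hi⟩|) :
    l2norm (fun i : (T ∩ (Tt \ Tl) : Finset (Fin N)) => x i.1) ≤
      2 * l2norm (fun i : Tt => projCoeff Φ Tt (Φ.mulVec x) i - x i.1) := by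
  classical
  set p : Tt → ℝ := projCoeff Φ Tt (Φ.mulVec x) with hp
  set P : Fin N → ℝ := fun i => if h : i ∈ Tt then p ⟨i, h⟩ else 0 with hP
  have hPmem : ∀ i (h : i ∈ Tt), P i = p ⟨i, h⟩ := fun i h => dif_pos h
  set S : Finset (Fin N) := T ∩ (Tt \ Tl) with hS
  set D : Finset (Fin N) := Tt \ Tl with hD
  -- squared-sum abbreviations
  set SE : ℝ := ∑ i ∈ Tt, (P i - x i) ^ 2 with hSE
  have hSEnn : 0 ≤ SE := Finset.sum_nonneg fun i _ => sq_nonneg _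
  -- rewrite goal norms as sums over Finsets
  have hLHS : l2norm (fun i : S => x i.1) = Real.sqrt (∑ i ∈ S, x i ^ 2) := by
    unfold l2norm
    rw [Finset.sum_coe_sort S (fun i => x i ^ 2)]
  have hRHS : l2norm (fun i : Tt => p i - x i.1) = Real.sqrt SE := by
    unfold l2norm
    rw [hSE, ← Finset.sum_coe_sort Tt (fun i => (P i - x i) ^ 2)]
    congr 1
    exact Finset.sum_congr rfl fun i _ => by rw [hPmem i.1 i.2]
  rw [hLHS, hRHS]
  -- T' : a K-subset of Tt \ T
  have hcardTtT : K ≤ (Tt \ T).card := by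
    have := Finset.le_card_sdiff T Tt
    omega
  obtain ⟨T', hT'sub, hT'card⟩ := Finset.exists_subset_card_eq hcardTtT
  have hT'Tt : T' ⊆ Tt := hT'sub.trans (Finset.sdiff_subset)
  have hDcard : D.card = K := by
    rw [hD, Finset.card_sdiff_of_subset hTl, hTt, hTlcard]; omega
  -- combinatorial step : ∑_{D} P² ≤ ∑_{T'} P²
  have hcomb : ∑ i ∈ D, P i ^ 2 ≤ ∑ i ∈ T', P i ^ 2 := by
    have hsplitD : ∑ i ∈ D, P i ^ 2 =
        ∑ i ∈ D ∩ T', P i ^ 2 + ∑ i ∈ D \ T', P i ^ 2 :=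
      (Finset.sum_inter_add_sum_sdiff D T' _).symm
    have hsplitT' : ∑ i ∈ T', P i ^ 2 =
        ∑ i ∈ T' ∩ D, P i ^ 2 + ∑ i ∈ T' \ D, P i ^ 2 :=
      (Finset.sum_inter_add_sum_sdiff T' D _).symm
    rw [hsplitD, hsplitT', Finset.inter_comm D T']
    refine add_le_add le_rfl ?_
    refine sum_le_sum_of_card_eq _ (fun a => sq_nonneg _) _ _ ?_ ?_
    · exact Finset.card_sdiff_comm (by rw [hDcard, hT'card])
    · intro a ha b hb
      have haD : a ∈ D := (Finset.mem_sdiff.mp ha).1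
      have haTt : a ∈ Tt := (Finset.mem_sdiff.mp haD).1
      have haTl : a ∉ Tl := (Finset.mem_sdiff.mp haD).2
      have hbT' : b ∈ T' := (Finset.mem_sdiff.mp hb).1
      have hbTt : b ∈ Tt := hT'Tt hbT'
      have hbTl : b ∈ Tl := by
        by_contra hbn
        exact (Finset.mem_sdiff.mp hb).2 (Finset.mem_sdiff.mpr ⟨hbTt, hbn⟩)
      have := hsel b hbTl a haTt haTl
      rw [hPmem a haTt, hPmem b hbTt]
      calc p ⟨a, haTt⟩ ^ 2 = |p ⟨a, haTt⟩| ^ 2 := (sq_abs _).symm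
        _ ≤ |p ⟨b, hbTt⟩| ^ 2 := by
            have : |p ⟨a, haTt⟩| ≤ |p ⟨b, hTl hbTl⟩| := this
            exact pow_le_pow_left₀ (abs_nonneg _) this 2
        _ = p ⟨b, hbTt⟩ ^ 2 := sq_abs _
  -- on T', x = 0, so P = P - x there
  have hT'eq : ∑ i ∈ T', P i ^ 2 = ∑ i ∈ T', (P i - x i) ^ 2 := by
    refine Finset.sum_congr rfl fun i hi => ?_
    have : x i = 0 := hsupp i (Finset.mem_sdiff.mp (hT'sub hi)).2
    rw [this, sub_zero]
  have hT'le : ∑ i ∈ T', (P i - x i) ^ 2 ≤ SE :=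
    Finset.sum_le_sum_of_subset_of_nonneg hT'Tt fun i _ _ => sq_nonneg _
  have hSsubD : S ⊆ D := Finset.inter_subset_right
  have hSP : ∑ i ∈ S, P i ^ 2 ≤ SE := by
    calc ∑ i ∈ S, P i ^ 2 ≤ ∑ i ∈ D, P i ^ 2 :=
          Finset.sum_le_sum_of_subset_of_nonneg hSsubD fun i _ _ => sq_nonneg _
      _ ≤ ∑ i ∈ T', P i ^ 2 := hcomb
      _ = ∑ i ∈ T', (P i - x i) ^ 2 := hT'eq
      _ ≤ SE := hT'le
  have hSsubTt : S ⊆ Tt := hSsubD.trans (Finset.sdiff_subset)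
  have hSe : ∑ i ∈ S, (x i - P i) ^ 2 ≤ SE := by
    calc ∑ i ∈ S, (x i - P i) ^ 2 = ∑ i ∈ S, (P i - x i) ^ 2 :=
          Finset.sum_congr rfl fun i _ => by rw [← neg_sub, neg_pow, neg_one_sq, one_mul]
      _ ≤ SE := Finset.sum_le_sum_of_subset_of_nonneg hSsubTt fun i _ _ => sq_nonneg _
  -- triangle inequality
  have htri : Real.sqrt (∑ i ∈ S, x i ^ 2) ≤
      Real.sqrt (∑ i ∈ S, P i ^ 2) + Real.sqrt (∑ i ∈ S, (x i - P i) ^ 2) := by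
    have : ∀ i, x i = P i + (x i - P i) := fun i => by ring
    calc Real.sqrt (∑ i ∈ S, x i ^ 2)
        = Real.sqrt (∑ i ∈ S, (P i + (x i - P i)) ^ 2) := by
          congr 1; exact Finset.sum_congr rfl fun i _ => by ring_nf
      _ ≤ _ := sqrt_sum_sq_add_le S P (fun i => x i - P i)
  calc Real.sqrt (∑ i ∈ S, x i ^ 2)
      ≤ Real.sqrt (∑ i ∈ S, P i ^ 2) + Real.sqrt (∑ i ∈ S, (x i - P i) ^ 2) := htri
    _ ≤ Real.sqrt SE + Real.sqrt SE :=
        add_le_add (Real.sqrt_le_sqrt hSP) (Real.sqrt_le_sqrt hSe)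
    _ = 2 * Real.sqrt SE := by ring
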